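/- arXiv:1805.08478 — 5 statements merged into one kernel-verified Lean document; each statement's English description precedes it below -/
import Mathlib

section
/- Let X be a CAT(0) cube complex, v a vertex of X, and r1, r2 two geodesic rays based at v. For i = 1,2 let 𝒲_i ⊆ 𝒲(r_i) denote the set of hyperplanes crossed by r_i that are adjacent to v. Then the union r1 ∪ r2 is a bi-infinite geodesic line if and only if 𝒲_1 ∩ 𝒲_2 = ∅. -/
/-!
We use the standard combinatorial model of a CAT(0) cube complex: it is identified
with its vertex set endowed with the combinatorial (ℓ¹) metric, i.e. with a median
graph `G` on a vertex type `V`.  Halfspaces are realised as the vertex sets of the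
two sides of the hyperplane dual to an edge, the Roller compactification `X̄` is the
set of ultrafilters of halfspaces, vertices embedding via principal ultrafilters,
and the Roller boundary `∂X` consists of the non-principal ultrafilters.
-/

open scoped ENNReal
open Set

namespace CCCR

variable {V V' : Type*}

/-- The interval between two vertices w.r.t. the combinatorial metric. -/
def vInterval (G : SimpleGraph V) (u v : V) : Set V :=
  {w : V | G.dist u w + G.dist w v = G.dist u v}

/-- Combinatorial model of a CAT(0) cube complex (identified with its vertex set,
endowed with the combinatorial metric): a connected median graph. -/
def IsCCC (G : SimpleGraph V) : Prop :=
  G.Connected ∧ ∀ x y z : V, ∃! m : V,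
    m ∈ vInterval G x y ∧ m ∈ vInterval G y z ∧ m ∈ vInterval G z x

/-- Halfspaces of the cube complex: the sides of the hyperplane dual to an edge. -/
def IsHalfspace (G : SimpleGraph V) (h : Set V) : Prop :=
  ∃ u v : V, G.Adj u v ∧ h = {w : V | G.dist w v < G.dist w u}

/-- The halfspace dual to the (oriented) edge `(u,v)` containing `v`. -/
def edgeHalf (G : SimpleGraph V) (u v : V) : Set V :=
  {w : V | G.dist w v < G.dist w u}

/-- The hyperplane (wall) dual to the edge `(u,v)`, recorded as its pair of sides. -/
def wallOf (G : SimpleGraph V) (u v : V) : Set (Set V) :=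
  {edgeHalf G u v, (edgeHalf G u v)ᶜ}

/-- Two (necessarily distinct) hyperplanes, with respective sides `h` and `k`,
are transverse: all four quarter-spaces are nonempty. -/
def Transv (h k : Set V) : Prop :=
  (h ∩ k).Nonempty ∧ (h ∩ kᶜ).Nonempty ∧ (hᶜ ∩ k).Nonempty ∧ (hᶜ ∩ kᶜ).Nonempty

/-- An ultrafilter of halfspaces: a point of the Roller compactification X̄.
It contains exactly one side of each hyperplane, and any two members intersect. -/
def IsUltra (G : SimpleGraph V) (σ : Set (Set V)) : Prop :=
  (∀ h ∈ σ, IsHalfspace G h) ∧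
  (∀ h : Set V, IsHalfspace G h → (h ∈ σ ↔ hᶜ ∉ σ)) ∧
  (∀ h ∈ σ, ∀ k ∈ σ, (h ∩ k).Nonempty)

/-- The principal ultrafilter of a vertex, i.e. the image of `v` in X̄. -/
def princ (G : SimpleGraph V) (v : V) : Set (Set V) :=
  {h : Set V | IsHalfspace G h ∧ v ∈ h}

/-- A point of the Roller boundary ∂X = X̄ ∖ X: a non-principal ultrafilter. -/
def IsBdryPt (G : SimpleGraph V) (σ : Set (Set V)) : Prop :=
  IsUltra G σ ∧ ∀ v : V, σ ≠ princ G v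

/-- The Roller boundary ∂X as a type. -/
abbrev Bdry (G : SimpleGraph V) : Type _ := {σ : Set (Set V) // IsBdryPt G σ}

/-- The Gromov product (x·y)_v = #𝒲(v | x, y) ∈ ℕ ∪ {+∞}, counted through the
sides containing both x and y but not v. -/
noncomputable def grom (_G : SimpleGraph V) (v : V) (x y : Set (Set V)) : ℕ∞ :=
  {h : Set V | h ∈ x ∧ h ∈ y ∧ v ∉ h}.encard

/-- The embedding ℕ ∪ {+∞} → ℤ ∪ {±∞}. -/
noncomputable def toE (n : ℕ∞) : EReal := ((n : ℝ≥0∞) : EReal)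

/-- The cross ratio cr_v(x,y,z,w) = (x·z)_v + (y·w)_v − (x·w)_v − (y·z)_v ∈ ℤ ∪ {±∞}. -/
noncomputable def crv (G : SimpleGraph V) (v : V) (x y z w : Set (Set V)) : EReal :=
  toE (grom G v x z) + toE (grom G v y w) - toE (grom G v x w) - toE (grom G v y z)

/-- The triple of sums of Gromov products attached to a 4-tuple. -/
noncomputable def tripod (G : SimpleGraph V) (v : V) (x y z w : Set (Set V)) :
    ℕ∞ × ℕ∞ × ℕ∞ :=
  (grom G v x y + grom G v z w, grom G v x z + grom G v y w, grom G v x w + grom G v y z)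

/-- (x,y,z,w) ∈ 𝒜 w.r.t. the basepoint v: at most one of the three sums is infinite. -/
def inA (G : SimpleGraph V) (v : V) (x y z w : Set (Set V)) : Prop :=
  ((tripod G v x y z w).1 ≠ ⊤ ∧ (tripod G v x y z w).2.1 ≠ ⊤) ∨
  ((tripod G v x y z w).1 ≠ ⊤ ∧ (tripod G v x y z w).2.2 ≠ ⊤) ∨
  ((tripod G v x y z w).2.1 ≠ ⊤ ∧ (tripod G v x y z w).2.2 ≠ ⊤)

/-- (x,y,z,w) ∈ 𝒜 (this is independent of the basepoint). -/
def memA (G : SimpleGraph V) (x y z w : Set (Set V)) : Prop :=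
  ∀ v : V, inA G v x y z w

/-- Two triples in (ℕ ∪ {+∞})³ are equivalent if they differ by adding a constant
n ∈ ℕ to all three entries. -/
def TripEquiv (p q : ℕ∞ × ℕ∞ × ℕ∞) : Prop :=
  (∃ n : ℕ, p.1 = q.1 + (n : ℕ∞) ∧ p.2.1 = q.2.1 + (n : ℕ∞) ∧ p.2.2 = q.2.2 + (n : ℕ∞)) ∨
  (∃ n : ℕ, q.1 = p.1 + (n : ℕ∞) ∧ q.2.1 = p.2.1 + (n : ℕ∞) ∧ q.2.2 = p.2.2 + (n : ℕ∞))

/-- crt(x,y,z,w) = ⟪a:b:c⟫ (the cross ratio triple is independent of the basepoint,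
so we require the equality of classes at every basepoint). -/
def crtEq (G : SimpleGraph V) (x y z w : Set (Set V)) (a b c : ℕ∞) : Prop :=
  ∀ v : V, TripEquiv (tripod G v x y z w) (a, b, c)

/-- The median of three points of X̄. -/
def med (x y z : Set (Set V)) : Set (Set V) := (x ∩ y) ∪ (y ∩ z) ∪ (z ∩ x)

/-- The interval I(x,y) ⊆ X̄ between two points of X̄. -/
def rInterval (G : SimpleGraph V) (x y : Set (Set V)) : Set (Set (Set V)) :=
  {σ : Set (Set V) | IsUltra G σ ∧ x ∩ y ⊆ σ}

/-- `Op G x y z` : x and y are opposite with respect to z, i.e. the median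
m = m(x,y,z) lies in X and I(x,y) = I(x,m) ∪ I(m,y). -/
def Op (G : SimpleGraph V) (x y z : Set (Set V)) : Prop :=
  (∃ p : V, med x y z = princ G p) ∧
  rInterval G x y = rInterval G x (med x y z) ∪ rInterval G (med x y z) y

/-- A geodesic ray (based at `r 0`). -/
def IsGeodRay (G : SimpleGraph V) (r : ℕ → V) : Prop :=
  (∀ n : ℕ, G.Adj (r n) (r (n + 1))) ∧
  ∀ m n : ℕ, m ≤ n → G.dist (r m) (r n) = n - m

/-- A bi-infinite geodesic line. -/
def IsGeodLine (G : SimpleGraph V) (L : ℤ → V) : Prop :=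
  (∀ n : ℤ, G.Adj (L n) (L (n + 1))) ∧
  ∀ m n : ℤ, m ≤ n → (G.dist (L m) (L n) : ℤ) = n - m

/-- The set 𝒲(r) of hyperplanes crossed by (the edges of) a ray. -/
def rayWalls (G : SimpleGraph V) (r : ℕ → V) : Set (Set (Set V)) :=
  {W : Set (Set V) | ∃ n : ℕ, W = wallOf G (r n) (r (n + 1))}

/-- A hyperplane is adjacent to `v` if it is dual to an edge incident to `v`. -/
def WallAdjTo (G : SimpleGraph V) (v : V) (W : Set (Set V)) : Prop :=
  ∃ u : V, G.Adj v u ∧ W = wallOf G v u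

/-- A straight ray: no two of the hyperplanes it crosses are transverse. -/
def RayStraight (G : SimpleGraph V) (r : ℕ → V) : Prop :=
  ∀ m n : ℕ, ¬ Transv (edgeHalf G (r m) (r (m + 1))) (edgeHalf G (r n) (r (n + 1)))

/-- A straight line: no two of the hyperplanes it crosses are transverse. -/
def LineStraight (G : SimpleGraph V) (L : ℤ → V) : Prop :=
  ∀ m n : ℤ, ¬ Transv (edgeHalf G (L m) (L (m + 1))) (edgeHalf G (L n) (L (n + 1)))

/-- The endpoint at infinity r⁺ ∈ ∂X of a ray: the ultrafilter of those halfspaces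
containing all but finitely many of its vertices. -/
def rayEnd (G : SimpleGraph V) (r : ℕ → V) : Set (Set V) :=
  {h : Set V | IsHalfspace G h ∧ ∃ N : ℕ, ∀ n : ℕ, N ≤ n → r n ∈ h}

/-- A straight point of the Roller boundary: the endpoint at infinity of a straight ray. -/
def IsStraightPt (G : SimpleGraph V) (x : Set (Set V)) : Prop :=
  ∃ r : ℕ → V, IsGeodRay G r ∧ RayStraight G r ∧ rayEnd G r = x

/-- x and y are the two endpoints at infinity of the line L. -/
def LineEnds (G : SimpleGraph V) (L : ℤ → V) (x y : Set (Set V)) : Prop :=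
  rayEnd G (fun n : ℕ => L (n : ℤ)) = x ∧ rayEnd G (fun n : ℕ => L (-(n : ℤ))) = y

/-- The edges from `v` to `a` and from `v` to `b` span a square. -/
def SpansSquare (G : SimpleGraph V) (v a b : V) : Prop :=
  ∃ w : V, w ≠ v ∧ G.Adj a w ∧ G.Adj b w

/-- An extremal vertex: some edge at `v` spans a square with every other edge at `v`. -/
def Extremal (G : SimpleGraph V) (v : V) : Prop :=
  ∃ a : V, G.Adj v a ∧ ∀ b : V, G.Adj v b → b ≠ a → SpansSquare G v a b

/-- The cube complex has no extremal vertices. -/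
def NoExtremal (G : SimpleGraph V) : Prop := ∀ v : V, ¬ Extremal G v

/-- A skinny vertex: exactly two incident edges. -/
def Skinny (G : SimpleGraph V) (v : V) : Prop := {u : V | G.Adj v u}.encard = 2

/-- A skinny ray: a geodesic ray whose initial vertex has at least three incident
edges and all of whose other vertices are skinny. -/
def IsSkinnyRay (G : SimpleGraph V) (r : ℕ → V) : Prop :=
  IsGeodRay G r ∧ 3 ≤ {u : V | G.Adj (r 0) u}.encard ∧ ∀ n : ℕ, 1 ≤ n → Skinny G (r n)

/-- (The vertex set of) a cube of the complex: a subset inducing a hypercube graph. -/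
def IsCube (G : SimpleGraph V) (c : Set V) : Prop :=
  ∃ (n : ℕ) (e : c ≃ (Fin n → Bool)),
    ∀ a b : c, G.Adj (a : V) (b : V) ↔ ∃! i : Fin n, e a i ≠ e b i

/-- A maximal cube. -/
def IsMaxCube (G : SimpleGraph V) (c : Set V) : Prop :=
  IsCube G c ∧ ∀ c' : Set V, IsCube G c' → c ⊆ c' → c' = c

/-- Completeness: there is no infinite ascending chain of cubes. -/
def CubeComplete (G : SimpleGraph V) : Prop :=
  ¬ ∃ c : ℕ → Set V, (∀ n : ℕ, IsCube G (c n)) ∧ ∀ n : ℕ, c n ⊂ c (n + 1)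

/-- No free faces: no non-maximal cube is contained in a unique maximal cube. -/
def NoFreeFaces (G : SimpleGraph V) : Prop :=
  ∀ c : Set V, IsCube G c → ¬ IsMaxCube G c → ¬ ∃! m : Set V, IsMaxCube G m ∧ c ⊆ m

/-- #𝒲(x, z | y, w): the number of hyperplanes separating x and z from y and w,
counted through the sides containing x and z. -/
noncomputable def sepCount (x z y w : Set (Set V)) : ℕ∞ :=
  {h : Set V | h ∈ x ∧ h ∈ z ∧ h ∉ y ∧ h ∉ w}.encard

/-- A Möbius map between Roller boundaries: it maps 𝒜(X) into 𝒜(Y) and preserves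
cross ratios. -/
def Mobius (G : SimpleGraph V) (G' : SimpleGraph V') (f : Bdry G → Bdry G') : Prop :=
  ∀ x y z w : Bdry G, memA G x.1 y.1 z.1 w.1 →
    memA G' (f x).1 (f y).1 (f z).1 (f w).1 ∧
    ∀ (v : V) (v' : V'),
      crv G' v' (f x).1 (f y).1 (f z).1 (f w).1 = crv G v x.1 y.1 z.1 w.1

/-- The induced action of a cubical isomorphism on X̄: an ultrafilter is mapped to
the set of images of its halfspaces. -/
def mapUltra (φ : V → V') (σ : Set (Set V)) : Set (Set V') :=
  (fun h : Set V => φ '' h) '' σ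

/-- The standard cubulation of ℝ: vertex set ℤ, edges between consecutive integers. -/
def zline : SimpleGraph ℤ := SimpleGraph.fromRel (fun m n => n = m + 1)

end CCCR

open CCCR
section AuxProofs

variable {V : Type*} {G : SimpleGraph V}

/-- Median graphs are "bipartite": distances to the two ends of an edge differ by one. -/
private lemma parity (hG : IsCCC G) {u u' : V} (h : G.Adj u u') (w : V) :
    G.dist w u' = G.dist w u + 1 ∨ G.dist w u = G.dist w u' + 1 := by
  have hc : G.Connected := hG.1
  obtain ⟨m, ⟨hm1, hm2, hm3⟩, -⟩ := hG.2 u u' w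
  simp only [vInterval, Set.mem_setOf_eq] at hm1 hm2 hm3
  have huu' : G.dist u u' = 1 := SimpleGraph.dist_eq_one_iff_adj.mpr h
  rw [huu'] at hm1
  rcases Nat.eq_zero_or_pos (G.dist u m) with h0 | hp
  · have hm : m = u := (hc.dist_eq_zero_iff.mp h0).symm
    subst hm
    left
    have c1 : G.dist u' m = G.dist m u' := SimpleGraph.dist_comm
    have c2 : G.dist m w = G.dist w m := SimpleGraph.dist_comm
    have c3 : G.dist u' w = G.dist w u' := SimpleGraph.dist_comm
    omega
  · have h0 : G.dist m u' = 0 := by omega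
    have hm : m = u' := hc.dist_eq_zero_iff.mp h0
    subst hm
    right
    have c1 : G.dist w m = G.dist m w := SimpleGraph.dist_comm
    have c2 : G.dist m u = G.dist u m := SimpleGraph.dist_comm
    have c3 : G.dist w u = G.dist u w := SimpleGraph.dist_comm
    omega

/-- Parallel transport along Θ-related edges: one direction of the comparison. -/
private lemma ladder (hG : IsCCC G) : ∀ k : ℕ, ∀ v m u u' : V,
    G.dist v m = 1 → G.dist u u' = 1 →
    G.dist u v = k → G.dist u' v = k + 1 → G.dist u m = k + 1 → G.dist u' m = k →
    ∀ w : V, G.dist w m < G.dist w v → G.dist w u' < G.dist w u := by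
  have hc : G.Connected := hG.1
  intro k
  induction k with
  | zero =>
    intro v m u u' hvm huu' huv hu'v hum hu'm w hw
    have h1 : u = v := hc.dist_eq_zero_iff.mp huv
    have h2 : u' = m := hc.dist_eq_zero_iff.mp hu'm
    rw [h1, h2]
    exact hw
  | succ k IH =>
    intro v m u u' hvm huu' huv hu'v hum hu'm w hw
    -- first vertex of a geodesic from u' to m
    obtain ⟨p, hp⟩ := hc.exists_walk_length_eq_dist u' m
    rw [hu'm] at hp
    cases p with
    | nil => simp at hp
    | cons hadj q =>
      rename_i x
      simp only [SimpleGraph.Walk.length_cons] at hp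
      have hq : q.length = k := by omega
      have hxm_le : G.dist x m ≤ k := hq ▸ SimpleGraph.dist_le q
      have hu'x : G.dist u' x = 1 := SimpleGraph.dist_eq_one_iff_adj.mpr hadj
      have hxm : G.dist x m = k := by
        have := hc.dist_triangle (u := u') (v := x) (w := m)
        omega
      have hxv : G.dist x v = k + 1 := by
        have t1 := hc.dist_triangle (u := x) (v := m) (w := v)
        have t2 := hc.dist_triangle (u := u') (v := x) (w := v)
        have c1 : G.dist m v = G.dist v m := SimpleGraph.dist_comm
        omega
      have hux : G.dist u x = 2 := by
        have t1 := hc.dist_triangle (u := u) (v := u') (w := x)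
        have t2 := hc.dist_triangle (u := u) (v := x) (w := m)
        omega
      -- the fourth corner of the square: median of u, x, v
      obtain ⟨q2, ⟨hq1, hq2, hq3⟩, -⟩ := hG.2 u x v
      simp only [vInterval, Set.mem_setOf_eq] at hq1 hq2 hq3
      rw [hux] at hq1
      rw [hxv] at hq2
      have hvu : G.dist v u = k + 1 := SimpleGraph.dist_comm.trans huv
      rw [hvu] at hq3
      have huq2 : G.dist u q2 = 1 := by
        rcases Nat.lt_or_ge (G.dist u q2) 1 with h0 | h1
        · exfalso
          have e : q2 = u := (hc.dist_eq_zero_iff.mp (by omega)).symm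
          rw [e] at hq2
          have c1 : G.dist x u = G.dist u x := SimpleGraph.dist_comm
          have c2 : G.dist u v = k + 1 := huv
          omega
        · rcases Nat.lt_or_ge (G.dist u q2) 2 with h2 | h2
          · omega
          · exfalso
            have h00 : G.dist q2 x = 0 := by omega
            have e : q2 = x := hc.dist_eq_zero_iff.mp h00
            rw [e] at hq3
            have c1 : G.dist v x = G.dist x v := SimpleGraph.dist_comm
            have c2 : G.dist x u = G.dist u x := SimpleGraph.dist_comm
            omega
      have hq2x : G.dist q2 x = 1 := by omega
      have hq2v : G.dist q2 v = k := by
        have c1 : G.dist q2 u = G.dist u q2 := SimpleGraph.dist_comm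
        have c2 : G.dist v q2 = G.dist q2 v := SimpleGraph.dist_comm
        omega
      have hq2m : G.dist q2 m = k + 1 := by
        have t1 := hc.dist_triangle (u := q2) (v := x) (w := m)
        have t2 := hc.dist_triangle (u := u) (v := q2) (w := m)
        omega
      -- apply the induction hypothesis to the parallel edge (q2, x)
      have hIH := IH v m q2 x hvm hq2x hq2v hxv hq2m hxm w hw
      have aq2x : G.Adj q2 x := SimpleGraph.dist_eq_one_iff_adj.mp hq2x
      have auq2 : G.Adj u q2 := SimpleGraph.dist_eq_one_iff_adj.mp huq2
      have p1 := parity hG aq2x w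
      have p2 := parity hG auq2 w
      have p3 := parity hG hadj w
      have cwx : G.dist w x = G.dist x w := SimpleGraph.dist_comm
      have hwq2 : G.dist w q2 = G.dist w x + 1 := by omega
      rcases p2 with hp2 | hp2
      · -- d w q2 = d w u + 1 : the delicate case
        rcases p3 with hp3 | hp3
        · omega
        · -- d w u' = d w x + 1 = d w u + 1 would give a forbidden K(2,3)
          exfalso
          have hwu : G.dist w u = G.dist w x := by omega
          have hwu' : G.dist w u' = G.dist w x + 1 := by omega
          obtain ⟨p', ⟨hr1, hr2, hr3⟩, -⟩ := hG.2 u x w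
          simp only [vInterval, Set.mem_setOf_eq] at hr1 hr2 hr3
          rw [hux] at hr1
          rw [cwx.symm] at hr2
          have cwu : G.dist w u = G.dist u w := SimpleGraph.dist_comm
          have hup' : G.dist u p' = 1 := by
            rcases Nat.lt_or_ge (G.dist u p') 1 with h0 | h1
            · exfalso
              have e : p' = u := (hc.dist_eq_zero_iff.mp (by omega)).symm
              rw [e] at hr2
              have c1 : G.dist x u = G.dist u x := SimpleGraph.dist_comm
              have c2 : G.dist u w = G.dist w u := SimpleGraph.dist_comm
              omega
            · rcases Nat.lt_or_ge (G.dist u p') 2 with h2 | h2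
              · omega
              · exfalso
                have h00 : G.dist p' x = 0 := by omega
                have e : p' = x := hc.dist_eq_zero_iff.mp h00
                rw [e] at hr3
                have c1 : G.dist x u = G.dist u x := SimpleGraph.dist_comm
                omega
          have hp'x : G.dist p' x = 1 := by omega
          have hwx_pos : 1 ≤ G.dist w x := by
            by_contra hcon
            have e1 : w = x := hc.dist_eq_zero_iff.mp (by omega)
            have e2 : w = u := hc.dist_eq_zero_iff.mp (by omega)
            rw [← e2, e1] at hux
            simp [SimpleGraph.dist_self] at hux
          have hwp' : G.dist w p' = G.dist w x - 1 := by
            have c : G.dist p' u = G.dist u p' := SimpleGraph.dist_comm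
            omega
          have hne1 : p' ≠ q2 := by intro e; rw [e] at hwp'; omega
          have hne2 : p' ≠ u' := by intro e; rw [e] at hwp'; omega
          have hne3 : q2 ≠ u' := by intro e; rw [e] at hq2v; omega
          have hxu' : G.dist x u' = 1 := SimpleGraph.dist_comm.trans hu'x
          have hxq2 : G.dist x q2 = 1 := SimpleGraph.dist_comm.trans hq2x
          have hxp' : G.dist x p' = 1 := SimpleGraph.dist_comm.trans hp'x
          -- pairwise distances between p', q2, u' are 2
          have dist2 : ∀ a b : V, a ≠ b → G.dist u a = 1 → G.dist u b = 1 →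
              G.dist a b = 2 := by
            intro a b hne ha hb
            have hle : G.dist a b ≤ 2 := by
              have t := hc.dist_triangle (u := a) (v := u) (w := b)
              have c : G.dist a u = G.dist u a := SimpleGraph.dist_comm
              omega
            have h0 : G.dist a b ≠ 0 := fun h => hne (hc.dist_eq_zero_iff.mp h)
            have h1 : G.dist a b ≠ 1 := by
              intro h
              have hadj' : G.Adj a b := SimpleGraph.dist_eq_one_iff_adj.mp h
              rcases parity hG hadj' u with hpp | hpp <;> omega
            omega
          have d12 : G.dist p' q2 = 2 := dist2 _ _ hne1 hup' huq2
          have d23 : G.dist q2 u' = 2 := dist2 _ _ hne3 huq2 huu'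
          have d13 : G.dist p' u' = 2 := dist2 _ _ hne2 hup' huu'
          have du'p' : G.dist u' p' = 2 := SimpleGraph.dist_comm.trans d13
          -- u and x are both medians of (p', q2, u') : contradiction with uniqueness
          obtain ⟨z, -, hzu⟩ := hG.2 p' q2 u'
          have hu_mem : u ∈ vInterval G p' q2 ∧ u ∈ vInterval G q2 u' ∧
              u ∈ vInterval G u' p' := by
            refine ⟨?_, ?_, ?_⟩ <;>
              simp only [vInterval, Set.mem_setOf_eq]
            · have c1 : G.dist p' u = G.dist u p' := SimpleGraph.dist_comm
              omega
            · have c1 : G.dist q2 u = G.dist u q2 := SimpleGraph.dist_comm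
              omega
            · have c1 : G.dist u' u = G.dist u u' := SimpleGraph.dist_comm
              omega
          have hx_mem : x ∈ vInterval G p' q2 ∧ x ∈ vInterval G q2 u' ∧
              x ∈ vInterval G u' p' := by
            refine ⟨?_, ?_, ?_⟩ <;>
              simp only [vInterval, Set.mem_setOf_eq] <;> omega
          have e1 : u = z := hzu u hu_mem
          have e2 : x = z := hzu x hx_mem
          have e3 : u = x := e1.trans e2.symm
          rw [e3] at hux
          simp [SimpleGraph.dist_self] at hux
      · -- d w u = d w q2 + 1 = d w x + 2 : immediate
        have t := hc.dist_triangle (u := w) (v := x) (w := u')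
        have c : G.dist x u' = G.dist u' x := SimpleGraph.dist_comm
        omega

/-- If a geodesic ray from `v` enters the halfspace of `m` (where `v ~ m`), then the
wall of the edge `(v,m)` is one of the walls crossed by the ray. -/
private lemma cross (hG : IsCCC G) {v : V} {r : ℕ → V} (hr : IsGeodRay G r)
    (hv : r 0 = v) {m : V} (hvm : G.dist v m = 1) {a : ℕ}
    (hma : G.dist (r a) m < G.dist (r a) v) :
    wallOf G v m ∈ rayWalls G r := by
  have hc : G.Connected := hG.1
  have avm : G.Adj v m := SimpleGraph.dist_eq_one_iff_adj.mp hvm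
  have hdv : ∀ j, G.dist (r j) v = j := by
    intro j
    rw [SimpleGraph.dist_comm, ← hv]
    simpa using hr.2 0 j (Nat.zero_le j)
  have hex : ∃ j, G.dist (r j) m < G.dist (r j) v := ⟨a, hma⟩
  classical
  set j0 := Nat.find hex with hj0
  have hPj0 : G.dist (r j0) m < G.dist (r j0) v := Nat.find_spec hex
  have hj0pos : 1 ≤ j0 := by
    rcases Nat.eq_zero_or_pos j0 with h0 | h1
    · exfalso
      rw [h0, hv] at hPj0
      rw [SimpleGraph.dist_self] at hPj0
      omega
    · exact h1
  set k := j0 - 1 with hk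
  have hkj : j0 = k + 1 := by omega
  have hPk : ¬ G.dist (r k) m < G.dist (r k) v := Nat.find_min hex (by omega)
  have hrm_k : G.dist (r k) m = k + 1 := by
    rcases parity hG avm (r k) with hp | hp <;> rw [hdv k] at * <;> omega
  have hrm_k1 : G.dist (r (k + 1)) m = k := by
    rw [hkj] at hPj0
    rcases parity hG avm (r (k + 1)) with hp | hp <;> rw [hdv (k + 1)] at * <;> omega
  have adjk : G.Adj (r k) (r (k + 1)) := hr.1 k
  have dk : G.dist (r k) (r (k + 1)) = 1 := SimpleGraph.dist_eq_one_iff_adj.mpr adjk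
  have hhalf : edgeHalf G (r k) (r (k + 1)) = edgeHalf G v m := by
    ext w
    simp only [edgeHalf, Set.mem_setOf_eq]
    constructor
    · intro hlt
      rcases parity hG avm w with hp | hp
      · exfalso
        have hmv : G.dist m v = 1 := SimpleGraph.dist_comm.trans hvm
        have dk' : G.dist (r (k + 1)) (r k) = 1 := SimpleGraph.dist_comm.trans dk
        have := ladder hG k m v (r (k + 1)) (r k) hmv dk'
          hrm_k1 hrm_k (hdv (k + 1)) (hdv k) w (by omega)
        omega
      · omega
    · intro hw
      exact ladder hG k v m (r k) (r (k + 1)) hvm dk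
        (hdv k) (hdv (k + 1)) hrm_k hrm_k1 w hw
  refine ⟨k, ?_⟩
  show wallOf G v m = wallOf G (r k) (r (k + 1))
  unfold wallOf
  rw [hhalf]

/-- The key lemma: if no wall adjacent to `v` is crossed by both rays, then the
two rays are at distance `a + b` from each other, spoke by spoke. -/
private lemma key (hG : IsCCC G) {v : V} {r1 r2 : ℕ → V} (h1 : IsGeodRay G r1)
    (h2 : IsGeodRay G r2) (hb1 : r1 0 = v) (hb2 : r2 0 = v)
    (hD : ∀ W : Set (Set V), ¬(W ∈ rayWalls G r1 ∧ WallAdjTo G v W ∧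
      W ∈ rayWalls G r2)) :
    ∀ a b : ℕ, G.dist (r1 a) (r2 b) = a + b := by
  have hc : G.Connected := hG.1
  have hd1 : ∀ j, G.dist (r1 j) v = j := by
    intro j; rw [SimpleGraph.dist_comm, ← hb1]; simpa using h1.2 0 j (Nat.zero_le j)
  have hd2 : ∀ j, G.dist (r2 j) v = j := by
    intro j; rw [SimpleGraph.dist_comm, ← hb2]; simpa using h2.2 0 j (Nat.zero_le j)
  suffices H : ∀ n a b, a + b ≤ n → G.dist (r1 a) (r2 b) = a + b from
    fun a b => H (a + b) a b le_rfl
  intro n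
  induction n with
  | zero =>
    intro a b h
    have ha : a = 0 := by omega
    have hb : b = 0 := by omega
    subst ha; subst hb
    rw [hb1, hb2]
    simp [SimpleGraph.dist_self]
  | succ n IH =>
    intro a b hab
    rcases Nat.eq_zero_or_pos a with ha0 | ha1
    · subst ha0
      rw [hb1, ← hb2]
      simpa using h2.2 0 b (Nat.zero_le b)
    rcases Nat.eq_zero_or_pos b with hb0 | hb1'
    · subst hb0
      rw [hb2, SimpleGraph.dist_comm, ← hb1]
      simpa using h1.2 0 a (Nat.zero_le a)
    have IH1 : G.dist (r1 (a - 1)) (r2 b) = (a - 1) + b := IH (a - 1) b (by omega)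
    have adj : G.Adj (r1 (a - 1)) (r1 a) := by
      have := h1.1 (a - 1)
      rwa [Nat.sub_add_cancel ha1] at this
    have IH1' : G.dist (r2 b) (r1 (a - 1)) = (a - 1) + b :=
      SimpleGraph.dist_comm.trans IH1
    rcases parity hG adj (r2 b) with hp | hp
    · rw [SimpleGraph.dist_comm]
      omega
    · exfalso
      have hs : G.dist (r1 a) (r2 b) = a + b - 2 := by
        rw [SimpleGraph.dist_comm]; omega
      obtain ⟨m, ⟨hm1, hm2, hm3⟩, -⟩ := hG.2 (r1 a) (r2 b) v
      simp only [vInterval, Set.mem_setOf_eq] at hm1 hm2 hm3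
      rw [hs] at hm1
      rw [hd2 b] at hm2
      have hva : G.dist v (r1 a) = a := SimpleGraph.dist_comm.trans (hd1 a)
      rw [hva] at hm3
      have c1 : G.dist m (r2 b) = G.dist (r2 b) m := SimpleGraph.dist_comm
      have c2 : G.dist m (r1 a) = G.dist (r1 a) m := SimpleGraph.dist_comm
      have c3 : G.dist v m = G.dist m v := SimpleGraph.dist_comm
      have hdvm : G.dist v m = 1 := by omega
      have hdam : G.dist (r1 a) m = a - 1 := by omega
      have hdbm : G.dist (r2 b) m = b - 1 := by omega
      have w1 : wallOf G v m ∈ rayWalls G r1 :=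
        cross hG h1 hb1 hdvm (a := a) (by rw [hdam, hd1 a]; omega)
      have w2 : wallOf G v m ∈ rayWalls G r2 :=
        cross hG h2 hb2 hdvm (a := b) (by rw [hdbm, hd2 b]; omega)
      exact hD _ ⟨w1, ⟨m, SimpleGraph.dist_eq_one_iff_adj.mp hdvm, rfl⟩, w2⟩

end AuxProofs

/-- Lemma `straight rays 2`: given a vertex `v` and two rays based
at `v`, their union is a bi-infinite geodesic line if and only if no hyperplane
adjacent to `v` is crossed by both rays. -/

theorem stmt0 {V : Type*} (G : SimpleGraph V) (hG : IsCCC G) (v : V)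
    (r1 r2 : ℕ → V) (h1 : IsGeodRay G r1) (h2 : IsGeodRay G r2)
    (hb1 : r1 0 = v) (hb2 : r2 0 = v) :
    IsGeodLine G (fun n : ℤ => if 0 ≤ n then r2 n.toNat else r1 (-n).toNat) ↔
      {W : Set (Set V) | W ∈ rayWalls G r1 ∧ WallAdjTo G v W} ∩
        {W : Set (Set V) | W ∈ rayWalls G r2 ∧ WallAdjTo G v W} = ∅ := by
  have hc : G.Connected := hG.1
  have hd1 : ∀ j, G.dist (r1 j) v = j := by
    intro j; rw [SimpleGraph.dist_comm, ← hb1]; simpa using h1.2 0 j (Nat.zero_le j)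
  have hd2 : ∀ j, G.dist (r2 j) v = j := by
    intro j; rw [SimpleGraph.dist_comm, ← hb2]; simpa using h2.2 0 j (Nat.zero_le j)
  have hLneg : ∀ a : ℕ,
      (if 0 ≤ -(a : ℤ) then r2 (-(a : ℤ)).toNat else r1 (- -(a : ℤ)).toNat) = r1 a := by
    intro a
    rcases Nat.eq_zero_or_pos a with h0 | h0
    · subst h0
      simp [hb1, hb2]
    · rw [if_neg (by omega)]
      congr 1
      omega
  have hLpos : ∀ b : ℕ,
      (if 0 ≤ (b : ℤ) then r2 ((b : ℤ)).toNat else r1 (-(b : ℤ)).toNat) = r2 b := by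
    intro b
    rw [if_pos (by positivity)]
    simp
  constructor
  · -- a geodesic line means the two rays cross no common wall at all
    intro hL
    rw [Set.eq_empty_iff_forall_notMem]
    rintro W ⟨⟨hW1, -⟩, hW2, -⟩
    obtain ⟨k, hk⟩ := hW1
    obtain ⟨l, hl⟩ := hW2
    have hdist : ∀ a b : ℕ, G.dist (r1 a) (r2 b) = a + b := by
      intro a b
      have hd := hL.2 (-(a : ℤ)) (b : ℤ) (by omega)
      simp only at hd
      rw [hLneg a, hLpos b] at hd
      omega
    have hwall : wallOf G (r1 k) (r1 (k + 1)) = wallOf G (r2 l) (r2 (l + 1)) :=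
      hk ▸ hl
    have hmem : edgeHalf G (r1 k) (r1 (k + 1)) ∈ wallOf G (r2 l) (r2 (l + 1)) := by
      rw [← hwall]; exact Set.mem_insert _ _
    have dk1 : G.dist (r1 (k + 1)) (r1 k) = 1 := by
      rw [SimpleGraph.dist_comm]
      exact SimpleGraph.dist_eq_one_iff_adj.mpr (h1.1 k)
    rcases hmem with heq | heq
    · -- equal halfspaces : test with the vertex r1 (k+1)
      have hin : r1 (k + 1) ∈ edgeHalf G (r1 k) (r1 (k + 1)) := by
        simp only [edgeHalf, Set.mem_setOf_eq, SimpleGraph.dist_self, dk1]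
        omega
      rw [heq] at hin
      simp only [edgeHalf, Set.mem_setOf_eq] at hin
      rw [hdist (k + 1) (l + 1), hdist (k + 1) l] at hin
      omega
    · -- opposite halfspaces : test with the vertex v
      simp only [Set.mem_singleton_iff] at heq
      have hout : v ∉ edgeHalf G (r1 k) (r1 (k + 1)) := by
        simp only [edgeHalf, Set.mem_setOf_eq]
        have e1 : G.dist v (r1 k) = k := SimpleGraph.dist_comm.trans (hd1 k)
        have e2 : G.dist v (r1 (k + 1)) = k + 1 := SimpleGraph.dist_comm.trans (hd1 (k + 1))
        omega
      have hin : v ∈ (edgeHalf G (r2 l) (r2 (l + 1)))ᶜ := by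
        simp only [Set.mem_compl_iff, edgeHalf, Set.mem_setOf_eq]
        have e1 : G.dist v (r2 l) = l := SimpleGraph.dist_comm.trans (hd2 l)
        have e2 : G.dist v (r2 (l + 1)) = l + 1 := SimpleGraph.dist_comm.trans (hd2 (l + 1))
        omega
      rw [← heq] at hin
      exact hout hin
  · -- conversely, disjointness of the adjacent walls gives a geodesic line
    intro hD
    have hD' : ∀ W : Set (Set V), ¬(W ∈ rayWalls G r1 ∧ WallAdjTo G v W ∧
        W ∈ rayWalls G r2) := by
      rintro W ⟨w1, wa, w2⟩
      have : W ∈ ({W : Set (Set V) | W ∈ rayWalls G r1 ∧ WallAdjTo G v W} ∩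
          {W : Set (Set V) | W ∈ rayWalls G r2 ∧ WallAdjTo G v W}) := ⟨⟨w1, wa⟩, w2, wa⟩
      rw [hD] at this
      exact this
    have hKEY := key hG h1 h2 hb1 hb2 hD'
    constructor
    · intro n
      simp only
      by_cases hn : 0 ≤ n
      · rw [if_pos hn, if_pos (by omega)]
        have e : (n + 1).toNat = n.toNat + 1 := by omega
        rw [e]
        exact h2.1 n.toNat
      · rw [if_neg hn]
        by_cases hn1 : n = -1
        · subst hn1
          rw [if_pos (by omega)]
          have e1 : (-(-1) : ℤ).toNat = 1 := by omega
          have e2 : ((-1 : ℤ) + 1).toNat = 0 := by omega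
          rw [e1, e2, hb2, ← hb1]
          exact (h1.1 0).symm
        · rw [if_neg (by omega)]
          have e : (-n).toNat = (-(n + 1)).toNat + 1 := by omega
          rw [e]
          exact (h1.1 _).symm
    · intro m n hmn
      simp only
      by_cases hm : 0 ≤ m
      · rw [if_pos hm, if_pos (by omega)]
        have hd := h2.2 m.toNat n.toNat (by omega)
        omega
      · by_cases hn : 0 ≤ n
        · rw [if_neg hm, if_pos hn]
          have hd := hKEY (-m).toNat n.toNat
          omega
        · rw [if_neg hm, if_neg hn]
          have hd := h1.2 (-n).toNat (-m).toNat (by omega)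
          have hcomm : G.dist (r1 (-m).toNat) (r1 (-n).toNat) =
              G.dist (r1 (-n).toNat) (r1 (-m).toNat) := SimpleGraph.dist_comm
          omega
end

section
/- Let X be a CAT(0) cube complex with no extremal vertices. Then every edge of X is contained in a straight bi-infinite geodesic line. -/
/-!
We use the standard combinatorial model of a CAT(0) cube complex: it is identified
with its vertex set endowed with the combinatorial (ℓ¹) metric, i.e. with a median
graph `G` on a vertex type `V`.  Halfspaces are realised as the vertex sets of the
two sides of the hyperplane dual to an edge, the Roller compactification `X̄` is the
set of ultrafilters of halfspaces, vertices embedding via principal ultrafilters,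
and the Roller boundary `∂X` consists of the non-principal ultrafilters.
-/

open scoped ENNReal
open Set

open CCCR

namespace StraightAux

variable {V : Type*} {G : SimpleGraph V}

/-- Median graphs are bipartite: no vertex is equidistant from the two
endpoints of an edge. -/
lemma bip (hG : IsCCC G) {a b : V} (hab : G.Adj a b) (x : V) :
    G.dist x a ≠ G.dist x b := by
  intro h
  obtain ⟨m, ⟨h1, h2, h3⟩, -⟩ := hG.2 x a b
  simp only [vInterval, Set.mem_setOf_eq] at h1 h2 h3
  have hab1 : G.dist a b = 1 := SimpleGraph.dist_eq_one_iff_adj.mpr hab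
  rw [hab1] at h2
  have h0 : G.dist a m = 0 ∨ G.dist m b = 0 := by omega
  rcases h0 with h0 | h0
  · obtain rfl := hG.1.dist_eq_zero_iff.mp h0
    have c1 : G.dist b a = G.dist a b := SimpleGraph.dist_comm (u := b) (v := a)
    have c2 : G.dist a x = G.dist x a := SimpleGraph.dist_comm (u := a) (v := x)
    have c3 : G.dist b x = G.dist x b := SimpleGraph.dist_comm (u := b) (v := x)
    omega
  · obtain rfl := hG.1.dist_eq_zero_iff.mp h0
    have c1 : G.dist m a = G.dist a m := SimpleGraph.dist_comm (u := m) (v := a)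
    omega

/-- Across an edge, the distance changes by exactly one. -/
lemma dist_succ_or (hG : IsCCC G) {a b : V} (hab : G.Adj a b) (x : V) :
    G.dist x b = G.dist x a + 1 ∨ G.dist x a = G.dist x b + 1 := by
  have h1 : G.dist x b ≤ G.dist x a + G.dist a b := hG.1.dist_triangle
  have h2 : G.dist x a ≤ G.dist x b + G.dist b a := hG.1.dist_triangle
  have hab1 : G.dist a b = 1 := SimpleGraph.dist_eq_one_iff_adj.mpr hab
  have hba1 : G.dist b a = 1 := SimpleGraph.dist_eq_one_iff_adj.mpr hab.symm
  have hne := bip hG hab x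
  omega

/-- Median graphs are triangle-free. -/
lemma no_triangle (hG : IsCCC G) {a b c : V} (hab : G.Adj a b) (hbc : G.Adj b c) :
    ¬ G.Adj a c := by
  intro hac
  have := bip hG hbc a
  rw [SimpleGraph.dist_eq_one_iff_adj.mpr hab, SimpleGraph.dist_eq_one_iff_adj.mpr hac] at this
  exact this rfl

lemma dist_two (hG : IsCCC G) {a b c : V} (hab : G.Adj a b) (hbc : G.Adj b c)
    (hca : c ≠ a) : G.dist a c = 2 := by
  have h1 : G.dist a c ≤ G.dist a b + G.dist b c := hG.1.dist_triangle
  rw [SimpleGraph.dist_eq_one_iff_adj.mpr hab, SimpleGraph.dist_eq_one_iff_adj.mpr hbc] at h1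
  have h0 : G.dist a c ≠ 0 := fun h => hca (hG.1.dist_eq_zero_iff.mp h).symm
  have h2 : G.dist a c ≠ 1 := fun h =>
    no_triangle hG hab hbc (SimpleGraph.dist_eq_one_iff_adj.mp h)
  omega

/-- Key nesting lemma: if consecutive edges of a path do not span a square,
the forward halfspaces are nested. -/
lemma nested (hG : IsCCC G) {a b c : V} (hab : G.Adj a b) (hbc : G.Adj b c)
    (hca : c ≠ a) (hsq : ¬ SpansSquare G b a c) :
    edgeHalf G b c ⊆ edgeHalf G a b := by
  intro x hx
  simp only [edgeHalf, Set.mem_setOf_eq] at hx ⊢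
  -- hx : dist x c < dist x b ; goal : dist x b < dist x a
  have hac : G.dist a c = 2 := dist_two hG hab hbc hca
  obtain ⟨m, ⟨h1, h2, h3⟩, -⟩ := hG.2 a c x
  simp only [vInterval, Set.mem_setOf_eq] at h1 h2 h3
  rw [hac] at h1
  have hxb : G.dist x b ≤ G.dist x c + 1 := by
    have := hG.1.dist_triangle (u := x) (v := c) (w := b)
    rwa [SimpleGraph.dist_eq_one_iff_adj.mpr hbc.symm] at this
  have hxa2 : G.dist x b ≤ G.dist x a + 1 := by
    have := hG.1.dist_triangle (u := x) (v := a) (w := b)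
    rwa [SimpleGraph.dist_eq_one_iff_adj.mpr hab] at this
  rcases Nat.lt_or_ge (G.dist a m) 1 with ham | ham
  · -- dist a m = 0 : m = a
    have hma : a = m := hG.1.dist_eq_zero_iff.mp (by omega : G.dist a m = 0)
    rw [← hma] at h2
    -- h2 : dist c a + dist a x = dist c x
    have c1 : G.dist c a = G.dist a c := SimpleGraph.dist_comm (u := c) (v := a)
    have c2 : G.dist a x = G.dist x a := SimpleGraph.dist_comm (u := a) (v := x)
    have c3 : G.dist c x = G.dist x c := SimpleGraph.dist_comm (u := c) (v := x)
    omega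
  rcases Nat.lt_or_ge (G.dist a m) 2 with ham2 | ham2
  · -- dist a m = 1 and dist m c = 1
    have hadj1 : G.Adj a m := SimpleGraph.dist_eq_one_iff_adj.mp (by omega)
    have hadj2 : G.Adj m c := SimpleGraph.dist_eq_one_iff_adj.mp (by omega)
    by_cases hmb : m = b
    · rw [hmb] at h2
      -- h2 : dist c b + dist b x = dist c x
      have c1 : G.dist c b = 1 := SimpleGraph.dist_eq_one_iff_adj.mpr hbc.symm
      have c2 : G.dist b x = G.dist x b := SimpleGraph.dist_comm (u := b) (v := x)
      have c3 : G.dist c x = G.dist x c := SimpleGraph.dist_comm (u := c) (v := x)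
      omega
    · exact absurd ⟨m, hmb, hadj1, hadj2.symm⟩ hsq
  · -- dist a m = 2, dist m c = 0 : m = c
    have hmc : m = c := hG.1.dist_eq_zero_iff.mp (by omega : G.dist m c = 0)
    rw [hmc] at h3
    -- h3 : dist x c + dist c a = dist x a
    have c1 : G.dist c a = G.dist a c := SimpleGraph.dist_comm (u := c) (v := a)
    omega

/-- Complement of a halfspace is the opposite halfspace. -/
lemma half_compl (hG : IsCCC G) {a b : V} (hab : G.Adj a b) :
    edgeHalf G b a = (edgeHalf G a b)ᶜ := by
  ext x
  simp only [edgeHalf, Set.mem_setOf_eq, Set.mem_compl_iff, not_lt]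
  have := dist_succ_or hG hab x
  omega

/-- Inductive construction of a straight ray continuing a given edge. -/
lemma forward (hG : IsCCC G) (hne : NoExtremal G) {u w : V} (huw : G.Adj u w) :
    ∃ r : ℕ → V, r 0 = u ∧ r 1 = w ∧ (∀ n, G.Adj (r n) (r (n + 1))) ∧
      ∀ n, edgeHalf G (r (n + 1)) (r (n + 2)) ⊆ edgeHalf G (r n) (r (n + 1)) := by
  classical
  have hstep : ∀ a b : V, G.Adj a b → ∃ c, G.Adj b c ∧ c ≠ a ∧ ¬ SpansSquare G b a c := by
    intro a b hab
    have h := hne b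
    unfold Extremal at h
    push_neg at h
    exact h a hab.symm
  choose f hf1 hf2 hf3 using hstep
  set F : V → V → V := fun a b => if h : G.Adj a b then f a b h else b with hF
  set g : ℕ → V × V := fun n => Nat.rec (u, w) (fun _ p => (p.2, F p.1 p.2)) n with hgdef
  have hg : ∀ n, g (n + 1) = ((g n).2, F (g n).1 (g n).2) := fun n => rfl
  have hadj : ∀ n, G.Adj (g n).1 (g n).2 := by
    intro n
    induction n with
    | zero => exact huw
    | succ n ih =>
      rw [hg n]
      simp only [hF]
      rw [dif_pos ih]
      exact hf1 _ _ ih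
  refine ⟨fun n => (g n).1, rfl, rfl, ?_, ?_⟩
  · intro n
    exact hadj n
  · intro n
    have hih := hadj n
    have h2 : (g (n + 1)).2 = f (g n).1 (g n).2 hih := by
      rw [hg n]
      simp only [hF]
      rw [dif_pos hih]
    have hc1 : G.Adj (g n).2 ((g (n + 1)).2) := by rw [h2]; exact hf1 _ _ hih
    have hc2 : (g (n + 1)).2 ≠ (g n).1 := by rw [h2]; exact hf2 _ _ hih
    have hc3 : ¬ SpansSquare G (g n).2 (g n).1 ((g (n + 1)).2) := by
      rw [h2]; exact hf3 _ _ hih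
    exact nested hG hih hc1 hc2 hc3

end StraightAux

open StraightAux
/-- Lemma `straight rays`: in a CAT(0) cube complex with no
extremal vertices, every edge extends to a straight bi-infinite geodesic line. -/
theorem stmt1 {V : Type*} (G : SimpleGraph V) (hG : IsCCC G) (hne : NoExtremal G)
    (u w : V) (huw : G.Adj u w) :
    ∃ L : ℤ → V, IsGeodLine G L ∧ LineStraight G L ∧ L 0 = u ∧ L 1 = w := by
  classical
  obtain ⟨r, hr0, hr1, hradj, hrnest⟩ := forward hG hne huw
  obtain ⟨s, hs0, hs1, hsadj, hsnest⟩ := forward hG hne huw.symm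
  set L : ℤ → V := fun n => if 0 ≤ n then r n.toNat else s (1 - n).toNat with hLdef
  have hLr : ∀ n : ℤ, 0 ≤ n → L n = r n.toNat := by
    intro n hn; simp [hLdef, hn]
  have hLs : ∀ n : ℤ, n ≤ 1 → L n = s (1 - n).toNat := by
    intro n hn
    rcases lt_or_ge n 0 with h | h
    · simp [hLdef, not_le.mpr h]
    · interval_cases n
      · have : ((1 : ℤ) - 0).toNat = 1 := rfl
        rw [this, hs1, hLr 0 le_rfl]
        simpa using hr0
      · have : ((1 : ℤ) - 1).toNat = 0 := rfl
        rw [this, hs0, hLr 1 zero_le_one]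
        simpa using hr1
  have hadj : ∀ n : ℤ, G.Adj (L n) (L (n + 1)) := by
    intro n
    rcases le_or_gt 0 n with h | h
    · rw [hLr n h, hLr (n + 1) (by omega)]
      have : (n + 1).toNat = n.toNat + 1 := by omega
      rw [this]
      exact hradj n.toNat
    · rw [hLs n (by omega), hLs (n + 1) (by omega)]
      have h1 : (1 - n).toNat = (1 - (n + 1)).toNat + 1 := by omega
      rw [h1]
      exact (hsadj (1 - (n + 1)).toNat).symm
  set H : ℤ → Set V := fun n => edgeHalf G (L n) (L (n + 1)) with hHdef
  have hstep : ∀ n : ℤ, H (n + 1) ⊆ H n := by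
    intro n
    rcases le_or_gt 0 n with h | h
    · simp only [hHdef]
      rw [show n + 1 + 1 = n + 2 by ring]
      rw [hLr n h, hLr (n + 1) (by omega), hLr (n + 2) (by omega)]
      have e1 : (n + 1).toNat = n.toNat + 1 := by omega
      have e2 : (n + 2).toNat = n.toNat + 2 := by omega
      rw [e1, e2]
      exact hrnest n.toNat
    · -- n ≤ -1
      simp only [hHdef]
      rw [show n + 1 + 1 = n + 2 by ring]
      rw [hLs n (by omega), hLs (n + 1) (by omega), hLs (n + 2) (by omega)]
      set b : ℕ := (1 - (n + 2)).toNat with hb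
      have e1 : (1 - (n + 1)).toNat = b + 1 := by omega
      have e2 : (1 - n).toNat = b + 2 := by omega
      rw [e1, e2]
      rw [half_compl hG (hsadj b), half_compl hG (hsadj (b + 1))]
      exact Set.compl_subset_compl.mpr (hsnest b)
  have hmono : ∀ (m : ℤ) (k : ℕ), H (m + k) ⊆ H m := by
    intro m k
    induction k with
    | zero => simp
    | succ k ih =>
      have e : (m + ((k : ℤ) + 1)) = (m + k) + 1 := by ring
      push_cast
      rw [e]
      exact (hstep (m + k)).trans ih
  have hnotin : ∀ n : ℤ, L n ∉ H n := by
    intro n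
    simp only [hHdef, edgeHalf, Set.mem_setOf_eq, not_lt]
    rw [SimpleGraph.dist_self]
    exact Nat.zero_le _
  have hdist : ∀ (m : ℤ) (k : ℕ), G.dist (L m) (L (m + k)) = k := by
    intro m k
    induction k with
    | zero => simpa using SimpleGraph.dist_self G
    | succ k ih =>
      have e : (m + ((k : ℤ) + 1)) = (m + k) + 1 := by ring
      push_cast
      rw [e]
      have hub : G.dist (L m) (L ((m + k) + 1)) ≤ k + 1 := by
        have h1 : G.dist (L m) (L ((m + k) + 1)) ≤
            G.dist (L m) (L (m + k)) + G.dist (L (m + k)) (L ((m + k) + 1)) :=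
          hG.1.dist_triangle
        rw [ih, SimpleGraph.dist_eq_one_iff_adj.mpr (hadj (m + k))] at h1
        exact h1
      have hlb : ¬ G.dist (L m) (L ((m + k) + 1)) < G.dist (L m) (L (m + k)) := by
        intro hc
        exact hnotin m (hmono m k hc)
      have hne' := bip hG (hadj (m + k)) (L m)
      rw [ih] at hlb hne'
      omega
  refine ⟨L, ⟨hadj, ?_⟩, ?_, by simpa using hLr 0 le_rfl ▸ hr0, ?_⟩
  · intro m n hmn
    obtain ⟨k, rfl⟩ := Int.le.dest hmn
    rw [hdist m k]
    push_cast
    ring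
  · intro m n htr
    rcases le_total m n with h | h
    · obtain ⟨k, rfl⟩ := Int.le.dest h
      obtain ⟨x, hx1, hx2⟩ := htr.2.2.1
      exact hx1 (hmono m k hx2)
    · obtain ⟨k, rfl⟩ := Int.le.dest h
      obtain ⟨x, hx1, hx2⟩ := htr.2.1
      exact hx2 (hmono n k hx1)
  · rw [hLr 1 zero_le_one]
    exact hr1
end

section
/- Let X be a CAT(0) cube complex. For every vertex v ∈ X and every 4-tuple (x,y,z,w) ∈ 𝒜, one has cr_v(x,y,z,w) = #𝒲({x,z}|{y,w}) − #𝒲({x,w}|{y,z}), where at most one of the two cardinalities on the right is infinite. -/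
/-!
We use the standard combinatorial model of a CAT(0) cube complex: it is identified
with its vertex set endowed with the combinatorial (ℓ¹) metric, i.e. with a median
graph `G` on a vertex type `V`.  Halfspaces are realised as the vertex sets of the
two sides of the hyperplane dual to an edge, the Roller compactification `X̄` is the
set of ultrafilters of halfspaces, vertices embedding via principal ultrafilters,
and the Roller boundary `∂X` consists of the non-principal ultrafilters.
-/

open scoped ENNReal
open Set

section StmtThreeHelpers
open CCCR Set

private lemma enc_union4 {α : Type*} {S S1 S2 S3 S4 : Set α}
    (h : S = S1 ∪ S2 ∪ S3 ∪ S4)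
    (d1 : Disjoint S1 S2) (d2 : Disjoint (S1 ∪ S2) S3) (d3 : Disjoint (S1 ∪ S2 ∪ S3) S4) :
    S.encard = S1.encard + S2.encard + S3.encard + S4.encard := by
  rw [h, Set.encard_union_eq d3, Set.encard_union_eq d2, Set.encard_union_eq d1]

private lemma enat_add_ne_top' {a b : ℕ∞} : a + b ≠ ⊤ ↔ a ≠ ⊤ ∧ b ≠ ⊤ := WithTop.add_ne_top

private lemma toE_top' : toE ⊤ = ⊤ := by simp [toE]

private lemma toE_coe' (n : ℕ) : toE (n : ℕ∞) = ((n : ℝ) : EReal) := by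
  simp [toE]; norm_cast

private lemma toE_ne_bot' (n : ℕ∞) : toE n ≠ ⊥ := by simp [toE]

private lemma main_arith (a b c d P K1 K2 K3 K4 : ℕ∞)
    (hP : P ≠ ⊤) (h1 : K1 ≠ ⊤) (h2 : K2 ≠ ⊤) (h3 : K3 ≠ ⊤) (h4 : K4 ≠ ⊤) :
    toE (P + K1 + K2 + a) + toE (P + K3 + K4 + b) - toE (P + K3 + K2 + c)
      - toE (P + K1 + K4 + d) = toE (a + b) - toE (c + d) := by
  lift P to ℕ using hP
  lift K1 to ℕ using h1
  lift K2 to ℕ using h2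
  lift K3 to ℕ using h3
  lift K4 to ℕ using h4
  rcases eq_or_ne c ⊤ with rfl | hc
  · simp [toE_top', sub_eq_add_neg]
  rcases eq_or_ne d ⊤ with rfl | hd
  · simp [toE_top', sub_eq_add_neg]
  lift c to ℕ using hc
  lift d to ℕ using hd
  rcases eq_or_ne a ⊤ with rfl | ha
  · have e1 : (P : ℕ∞) + K1 + K2 + (⊤ : ℕ∞) = ⊤ := by simp
    have e2 : (⊤ : ℕ∞) + b = ⊤ := by simp
    rw [e1, e2, toE_top']
    rw [show ((P : ℕ∞) + K3 + K2 + c) = (((P + K3 + K2 + c : ℕ) : ℕ∞)) by push_cast; ring]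
    rw [show ((P : ℕ∞) + K1 + K4 + d) = (((P + K1 + K4 + d : ℕ) : ℕ∞)) by push_cast; ring]
    rw [show ((c : ℕ∞) + d) = (((c + d : ℕ) : ℕ∞)) by push_cast; ring]
    rw [toE_coe', toE_coe', toE_coe']
    rw [EReal.top_add_of_ne_bot (toE_ne_bot' _)]
    rw [EReal.top_sub_coe, EReal.top_sub_coe, EReal.top_sub_coe]
  rcases eq_or_ne b ⊤ with rfl | hb
  · have e1 : (P : ℕ∞) + K3 + K4 + (⊤ : ℕ∞) = ⊤ := by simp
    have e2 : a + (⊤ : ℕ∞) = ⊤ := by simp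
    rw [e1, e2, toE_top']
    lift a to ℕ using ha
    rw [show ((P : ℕ∞) + K3 + K2 + c) = (((P + K3 + K2 + c : ℕ) : ℕ∞)) by push_cast; ring]
    rw [show ((P : ℕ∞) + K1 + K4 + d) = (((P + K1 + K4 + d : ℕ) : ℕ∞)) by push_cast; ring]
    rw [show ((c : ℕ∞) + d) = (((c + d : ℕ) : ℕ∞)) by push_cast; ring]
    rw [toE_coe', toE_coe', toE_coe']
    rw [EReal.add_top_of_ne_bot (toE_ne_bot' _)]
    rw [EReal.top_sub_coe, EReal.top_sub_coe, EReal.top_sub_coe]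
  lift a to ℕ using ha
  lift b to ℕ using hb
  rw [show ((P : ℕ∞) + K1 + K2 + a) = (((P + K1 + K2 + a : ℕ) : ℕ∞)) by push_cast; ring]
  rw [show ((P : ℕ∞) + K3 + K4 + b) = (((P + K3 + K4 + b : ℕ) : ℕ∞)) by push_cast; ring]
  rw [show ((P : ℕ∞) + K3 + K2 + c) = (((P + K3 + K2 + c : ℕ) : ℕ∞)) by push_cast; ring]
  rw [show ((P : ℕ∞) + K1 + K4 + d) = (((P + K1 + K4 + d : ℕ) : ℕ∞)) by push_cast; ring]
  rw [show ((a : ℕ∞) + b) = (((a + b : ℕ) : ℕ∞)) by push_cast; ring]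
  rw [show ((c : ℕ∞) + d) = (((c + d : ℕ) : ℕ∞)) by push_cast; ring]
  simp only [toE_coe']
  have key : ((P + K1 + K2 + a : ℕ) : ℝ) + ((P + K3 + K4 + b : ℕ) : ℝ)
      - ((P + K3 + K2 + c : ℕ) : ℝ) - ((P + K1 + K4 + d : ℕ) : ℝ)
      = ((a + b : ℕ) : ℝ) - ((c + d : ℕ) : ℝ) := by push_cast; ring
  exact_mod_cast congrArg (fun r : ℝ => (r : EReal)) key

private lemma sep_split {V : Type*} {G : SimpleGraph V} {x y z w : Set (Set V)}
    (hx : IsUltra G x) (hy : IsUltra G y) (hz : IsUltra G z) (hw : IsUltra G w) (v : V) :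
    sepCount x z y w =
      {h : Set V | h ∈ x ∧ h ∉ y ∧ h ∈ z ∧ h ∉ w ∧ v ∉ h}.encard +
      {h : Set V | h ∉ x ∧ h ∈ y ∧ h ∉ z ∧ h ∈ w ∧ v ∉ h}.encard := by
  have himg : {h : Set V | h ∈ x ∧ h ∈ z ∧ h ∉ y ∧ h ∉ w} =
      {h : Set V | h ∈ x ∧ h ∉ y ∧ h ∈ z ∧ h ∉ w ∧ v ∉ h} ∪
        compl '' {h : Set V | h ∉ x ∧ h ∈ y ∧ h ∉ z ∧ h ∈ w ∧ v ∉ h} := by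
    ext a
    simp only [Set.mem_union, Set.mem_setOf_eq, Set.mem_image]
    constructor
    · rintro ⟨hax, haz, hay, haw⟩
      by_cases hv : v ∈ a
      · right
        have hs : IsHalfspace G a := hx.1 a hax
        refine ⟨aᶜ, ⟨?_, ?_, ?_, ?_, ?_⟩, compl_compl a⟩
        · exact (hx.2.1 a hs).mp hax
        · by_contra hcon; exact hay ((hy.2.1 a hs).mpr hcon)
        · exact (hz.2.1 a hs).mp haz
        · by_contra hcon; exact haw ((hw.2.1 a hs).mpr hcon)
        · simp only [Set.mem_compl_iff, not_not]; exact hv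
      · left; exact ⟨hax, hay, haz, haw, hv⟩
    · rintro (⟨h1, h2, h3, h4, _⟩ | ⟨k, ⟨k1, k2, k3, k4, _⟩, rfl⟩)
      · exact ⟨h1, h3, h2, h4⟩
      · have hs : IsHalfspace G k := hy.1 k k2
        refine ⟨?_, ?_, ?_, ?_⟩
        · by_contra hcon; exact k1 ((hx.2.1 k hs).mpr hcon)
        · by_contra hcon; exact k3 ((hz.2.1 k hs).mpr hcon)
        · exact (hy.2.1 k hs).mp k2
        · exact (hw.2.1 k hs).mp k4
  have hd : Disjoint {h : Set V | h ∈ x ∧ h ∉ y ∧ h ∈ z ∧ h ∉ w ∧ v ∉ h}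
      (compl '' {h : Set V | h ∉ x ∧ h ∈ y ∧ h ∉ z ∧ h ∈ w ∧ v ∉ h}) := by
    rw [Set.disjoint_left]
    rintro a ⟨_, _, _, _, hv⟩ ⟨k, ⟨_, _, _, _, hkv⟩, rfl⟩
    exact hv hkv
  simp only [sepCount]
  rw [himg, Set.encard_union_eq hd, compl_injective.encard_image _]

end StmtThreeHelpers

open CCCR
/-- Proposition `independent of basepoint`: for every vertex `v`
and every 4-tuple `(x,y,z,w) ∈ 𝒜` one has
`cr_v(x,y,z,w) = #𝒲(x,z|y,w) − #𝒲(x,w|y,z)`, and at most one of the two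
cardinalities on the right is infinite. -/
theorem stmt3 {V : Type*} (G : SimpleGraph V) (hG : IsCCC G) (v : V)
    (x y z w : Set (Set V)) (hx : IsUltra G x) (hy : IsUltra G y)
    (hz : IsUltra G z) (hw : IsUltra G w) (hA : memA G x y z w) :
    crv G v x y z w = toE (sepCount x z y w) - toE (sepCount x w y z) ∧
      (sepCount x z y w ≠ ⊤ ∨ sepCount x w y z ≠ ⊤) := by
  have e1 : grom G v x z =
      {h : Set V | h ∈ x ∧ h ∈ y ∧ h ∈ z ∧ h ∈ w ∧ v ∉ h}.encard + {h : Set V | h ∈ x ∧ h ∈ y ∧ h ∈ z ∧ h ∉ w ∧ v ∉ h}.encard + {h : Set V | h ∈ x ∧ h ∉ y ∧ h ∈ z ∧ h ∈ w ∧ v ∉ h}.encard + {h : Set V | h ∈ x ∧ h ∉ y ∧ h ∈ z ∧ h ∉ w ∧ v ∉ h}.encard := by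
    simp only [grom]
    apply enc_union4
    · ext a; simp only [Set.mem_union, Set.mem_setOf_eq]; tauto
    all_goals
      rw [Set.disjoint_left]
      intro a ha hb
      simp only [Set.mem_union, Set.mem_setOf_eq] at ha hb
      tauto
  have e2 : grom G v y w =
      {h : Set V | h ∈ x ∧ h ∈ y ∧ h ∈ z ∧ h ∈ w ∧ v ∉ h}.encard + {h : Set V | h ∈ x ∧ h ∈ y ∧ h ∉ z ∧ h ∈ w ∧ v ∉ h}.encard + {h : Set V | h ∉ x ∧ h ∈ y ∧ h ∈ z ∧ h ∈ w ∧ v ∉ h}.encard + {h : Set V | h ∉ x ∧ h ∈ y ∧ h ∉ z ∧ h ∈ w ∧ v ∉ h}.encard := by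
    simp only [grom]
    apply enc_union4
    · ext a; simp only [Set.mem_union, Set.mem_setOf_eq]; tauto
    all_goals
      rw [Set.disjoint_left]
      intro a ha hb
      simp only [Set.mem_union, Set.mem_setOf_eq] at ha hb
      tauto
  have e3 : grom G v x w =
      {h : Set V | h ∈ x ∧ h ∈ y ∧ h ∈ z ∧ h ∈ w ∧ v ∉ h}.encard + {h : Set V | h ∈ x ∧ h ∈ y ∧ h ∉ z ∧ h ∈ w ∧ v ∉ h}.encard + {h : Set V | h ∈ x ∧ h ∉ y ∧ h ∈ z ∧ h ∈ w ∧ v ∉ h}.encard + {h : Set V | h ∈ x ∧ h ∉ y ∧ h ∉ z ∧ h ∈ w ∧ v ∉ h}.encard := by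
    simp only [grom]
    apply enc_union4
    · ext a; simp only [Set.mem_union, Set.mem_setOf_eq]; tauto
    all_goals
      rw [Set.disjoint_left]
      intro a ha hb
      simp only [Set.mem_union, Set.mem_setOf_eq] at ha hb
      tauto
  have e4 : grom G v y z =
      {h : Set V | h ∈ x ∧ h ∈ y ∧ h ∈ z ∧ h ∈ w ∧ v ∉ h}.encard + {h : Set V | h ∈ x ∧ h ∈ y ∧ h ∈ z ∧ h ∉ w ∧ v ∉ h}.encard + {h : Set V | h ∉ x ∧ h ∈ y ∧ h ∈ z ∧ h ∈ w ∧ v ∉ h}.encard + {h : Set V | h ∉ x ∧ h ∈ y ∧ h ∈ z ∧ h ∉ w ∧ v ∉ h}.encard := by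
    simp only [grom]
    apply enc_union4
    · ext a; simp only [Set.mem_union, Set.mem_setOf_eq]; tauto
    all_goals
      rw [Set.disjoint_left]
      intro a ha hb
      simp only [Set.mem_union, Set.mem_setOf_eq] at ha hb
      tauto
  have s1 : sepCount x z y w = {h : Set V | h ∈ x ∧ h ∉ y ∧ h ∈ z ∧ h ∉ w ∧ v ∉ h}.encard + {h : Set V | h ∉ x ∧ h ∈ y ∧ h ∉ z ∧ h ∈ w ∧ v ∉ h}.encard :=
    sep_split hx hy hz hw v
  have s2 : sepCount x w y z = {h : Set V | h ∈ x ∧ h ∉ y ∧ h ∉ z ∧ h ∈ w ∧ v ∉ h}.encard + {h : Set V | h ∉ x ∧ h ∈ y ∧ h ∈ z ∧ h ∉ w ∧ v ∉ h}.encard := by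
    rw [sep_split hx hy hw hz v]
    congr 1
    · exact congrArg Set.encard (by ext a; simp only [Set.mem_setOf_eq]; tauto)
    · exact congrArg Set.encard (by ext a; simp only [Set.mem_setOf_eq]; tauto)
  have hAv := hA v
  simp only [inA, tripod] at hAv
  have hT : (grom G v x z + grom G v y w ≠ ⊤) ∨ (grom G v x w + grom G v y z ≠ ⊤) := by
    tauto
  rcases hT with h2 | h3
  · rw [enat_add_ne_top'] at h2
    obtain ⟨hxz, hyw⟩ := h2
    rw [e1, enat_add_ne_top', enat_add_ne_top', enat_add_ne_top'] at hxz
    rw [e2, enat_add_ne_top', enat_add_ne_top', enat_add_ne_top'] at hyw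
    refine ⟨?_, Or.inl ?_⟩
    · simp only [crv]
      rw [e1, e2, e3, e4, s1, s2]
      exact main_arith _ _ _ _ _ _ _ _ _ hxz.1.1.1 hxz.1.1.2 hxz.1.2 hyw.1.1.2 hyw.1.2
    · rw [s1, enat_add_ne_top']
      exact ⟨hxz.2, hyw.2⟩
  · rw [enat_add_ne_top'] at h3
    obtain ⟨hxw, hyz⟩ := h3
    rw [e3, enat_add_ne_top', enat_add_ne_top', enat_add_ne_top'] at hxw
    rw [e4, enat_add_ne_top', enat_add_ne_top', enat_add_ne_top'] at hyz
    refine ⟨?_, Or.inr ?_⟩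
    · simp only [crv]
      rw [e1, e2, e3, e4, s1, s2]
      exact main_arith _ _ _ _ _ _ _ _ _ hxw.1.1.1 hyz.1.1.2 hxw.1.2 hxw.1.1.2 hyz.1.2
    · rw [s2, enat_add_ne_top']
      exact ⟨hxw.2, hyz.2⟩
end

section
/- Let X be a CAT(0) cube complex. Then for all vertices v, v' ∈ X and every (x,y,z,w) ∈ 𝒜, one has cr_v(x,y,z,w) = cr_{v'}(x,y,z,w); moreover, for every cubical automorphism g of X and its induced action on X̄, one has cr_v(g(x),g(y),g(z),g(w)) = cr_v(x,y,z,w) for every (x,y,z,w) ∈ 𝒜. -/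
/-!
We use the standard combinatorial model of a CAT(0) cube complex: it is identified
with its vertex set endowed with the combinatorial (ℓ¹) metric, i.e. with a median
graph `G` on a vertex type `V`.  Halfspaces are realised as the vertex sets of the
two sides of the hyperplane dual to an edge, the Roller compactification `X̄` is the
set of ultrafilters of halfspaces, vertices embedding via principal ultrafilters,
and the Roller boundary `∂X` consists of the non-principal ultrafilters.
-/

open scoped ENNReal
open Set

namespace CCCRProof
open CCCR

variable {V : Type*} {G : SimpleGraph V}

lemma compl_mem_iff {x : Set (Set V)} (hx : IsUltra G x) {h : Set V}
    (hh : IsHalfspace G h) : hᶜ ∈ x ↔ h ∉ x := by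
  have := hx.2.1 h hh; tauto

/-- The `q`-part of the decomposition of a Gromov-product sum. -/
noncomputable def qpart (v : V) (x y z w : Set (Set V)) : ℕ∞ :=
  {h : Set V | (h ∈ x ∧ h ∈ z ∧ v ∉ h) ∧ (h ∈ y ∨ h ∈ w)}.encard +
  {h : Set V | (h ∈ y ∧ h ∈ w ∧ v ∉ h) ∧ (h ∈ x ∨ h ∈ z)}.encard

lemma split_lemma {x y z w : Set (Set V)} (hx : IsUltra G x) (hy : IsUltra G y)
    (hz : IsUltra G z) (hw : IsUltra G w) (v : V) :
    grom G v x z + grom G v y w = sepCount x z y w + qpart v x y z w := by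
  classical
  set Ap : Set (Set V) := {h | (h ∈ x ∧ h ∈ z ∧ h ∉ y ∧ h ∉ w) ∧ v ∉ h} with hApdef
  set Aq : Set (Set V) := {h | (h ∈ x ∧ h ∈ z ∧ v ∉ h) ∧ (h ∈ y ∨ h ∈ w)} with hAqdef
  set Bp : Set (Set V) := {h | (h ∈ y ∧ h ∈ w ∧ h ∉ x ∧ h ∉ z) ∧ v ∉ h} with hBpdef
  set Bq : Set (Set V) := {h | (h ∈ y ∧ h ∈ w ∧ v ∉ h) ∧ (h ∈ x ∨ h ∈ z)} with hBqdef
  set Pin : Set (Set V) := {h | (h ∈ x ∧ h ∈ z ∧ h ∉ y ∧ h ∉ w) ∧ v ∈ h} with hPindef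
  have hA : grom G v x z = Ap.encard + Aq.encard := by
    rw [grom, show {h : Set V | h ∈ x ∧ h ∈ z ∧ v ∉ h} = Ap ∪ Aq from by
      ext h; simp only [hApdef, hAqdef, mem_union, mem_setOf_eq]; tauto]
    exact Set.encard_union_eq (by
      rw [Set.disjoint_left]; intro h h1 h2
      simp only [hApdef, hAqdef, mem_setOf_eq] at h1 h2; tauto)
  have hB : grom G v y w = Bp.encard + Bq.encard := by
    rw [grom, show {h : Set V | h ∈ y ∧ h ∈ w ∧ v ∉ h} = Bp ∪ Bq from by
      ext h; simp only [hBpdef, hBqdef, mem_union, mem_setOf_eq]; tauto]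
    exact Set.encard_union_eq (by
      rw [Set.disjoint_left]; intro h h1 h2
      simp only [hBpdef, hBqdef, mem_setOf_eq] at h1 h2; tauto)
  have hP : sepCount x z y w = Ap.encard + Pin.encard := by
    rw [sepCount, show {h : Set V | h ∈ x ∧ h ∈ z ∧ h ∉ y ∧ h ∉ w} = Ap ∪ Pin from by
      ext h; simp only [hApdef, hPindef, mem_union, mem_setOf_eq]; tauto]
    exact Set.encard_union_eq (by
      rw [Set.disjoint_left]; intro h h1 h2
      simp only [hApdef, hPindef, mem_setOf_eq] at h1 h2; tauto)
  have hPin : Pin.encard = Bp.encard := by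
    have himg : Pin = compl '' Bp := by
      ext h; constructor
      · intro hh
        simp only [hPindef, mem_setOf_eq] at hh
        obtain ⟨⟨hhx, hhz, hhy, hhw⟩, hv⟩ := hh
        have hal : IsHalfspace G h := hx.1 h hhx
        refine ⟨hᶜ, ?_, compl_compl h⟩
        simp only [hBpdef, mem_setOf_eq]
        refine ⟨⟨(compl_mem_iff hy hal).mpr hhy, (compl_mem_iff hw hal).mpr hhw,
          ?_, ?_⟩, ?_⟩
        · exact fun hc => ((hx.2.1 h hal).mp hhx) hc
        · exact fun hc => ((hz.2.1 h hal).mp hhz) hc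
        · simp only [mem_compl_iff, not_not]; exact hv
      · rintro ⟨k, hk, rfl⟩
        simp only [hBpdef, mem_setOf_eq] at hk
        obtain ⟨⟨hky, hkw, hkx, hkz⟩, hkv⟩ := hk
        have hal : IsHalfspace G k := hy.1 k hky
        simp only [hPindef, mem_setOf_eq]
        refine ⟨⟨(compl_mem_iff hx hal).mpr hkx, (compl_mem_iff hz hal).mpr hkz,
          fun hc => ((hy.2.1 k hal).mp hky) hc,
          fun hc => ((hw.2.1 k hal).mp hkw) hc⟩, hkv⟩
    rw [himg, compl_injective.encard_image _]
  rw [hA, hB, hP, hPin, qpart]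
  ring

lemma qswap (x y z w : Set (Set V)) (v : V) :
    qpart v x y z w = qpart v x y w z := by
  classical
  rw [qpart, qpart, ← Set.encard_union_add_encard_inter]
  have hU : {h : Set V | (h ∈ x ∧ h ∈ z ∧ v ∉ h) ∧ (h ∈ y ∨ h ∈ w)} ∪
      {h : Set V | (h ∈ y ∧ h ∈ w ∧ v ∉ h) ∧ (h ∈ x ∨ h ∈ z)} =
      {h : Set V | (h ∈ x ∧ h ∈ w ∧ v ∉ h) ∧ (h ∈ y ∨ h ∈ z)} ∪
      {h : Set V | (h ∈ y ∧ h ∈ z ∧ v ∉ h) ∧ (h ∈ x ∨ h ∈ w)} := by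
    ext h
    by_cases ha : h ∈ x <;> by_cases hb : h ∈ y <;> by_cases hc : h ∈ z <;>
      by_cases hd : h ∈ w <;>
      simp only [mem_union, mem_setOf_eq, ha, hb, hc, hd, true_and, and_true,
        false_and, and_false, true_or, or_true, false_or, or_false,
        not_true_eq_false, not_false_eq_true] <;> tauto
  have hI : {h : Set V | (h ∈ x ∧ h ∈ z ∧ v ∉ h) ∧ (h ∈ y ∨ h ∈ w)} ∩
      {h : Set V | (h ∈ y ∧ h ∈ w ∧ v ∉ h) ∧ (h ∈ x ∨ h ∈ z)} =
      {h : Set V | (h ∈ x ∧ h ∈ w ∧ v ∉ h) ∧ (h ∈ y ∨ h ∈ z)} ∩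
      {h : Set V | (h ∈ y ∧ h ∈ z ∧ v ∉ h) ∧ (h ∈ x ∨ h ∈ w)} := by
    ext h
    by_cases ha : h ∈ x <;> by_cases hb : h ∈ y <;> by_cases hc : h ∈ z <;>
      by_cases hd : h ∈ w <;>
      simp only [mem_inter_iff, mem_setOf_eq, ha, hb, hc, hd, true_and, and_true,
        false_and, and_false, true_or, or_true, false_or, or_false,
        not_true_eq_false, not_false_eq_true] <;> tauto
  rw [hU, hI]
  exact Set.encard_union_add_encard_inter _ _

lemma toE_coe (n : ℕ) : toE (n : ℕ∞) = ((n : ℝ) : EReal) := by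
  rw [toE]; norm_cast

lemma toE_top : toE (⊤ : ℕ∞) = ⊤ := by
  rw [toE]; norm_cast

lemma toE_ne_bot (n : ℕ∞) : toE n ≠ ⊥ := EReal.coe_ennreal_ne_bot _

lemma key {x y z w : Set (Set V)} (hx : IsUltra G x) (hy : IsUltra G y)
    (hz : IsUltra G z) (hw : IsUltra G w) (hA : memA G x y z w) (v : V) :
    crv G v x y z w = toE (sepCount x z y w) - toE (sepCount x w y z) := by
  classical
  have e2 : grom G v x z + grom G v y w = sepCount x z y w + qpart v x y z w :=
    split_lemma hx hy hz hw v
  have e3 : grom G v x w + grom G v y z = sepCount x w y z + qpart v x y z w := by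
    rw [qswap]; exact split_lemma hx hy hw hz v
  have h23 : grom G v x z + grom G v y w ≠ ⊤ ∨ grom G v x w + grom G v y z ≠ ⊤ := by
    rcases hA v with ⟨_, h⟩ | ⟨_, h⟩ | ⟨h, _⟩
    · exact Or.inl h
    · exact Or.inr h
    · exact Or.inl h
  have hq : qpart v x y z w ≠ ⊤ := by
    intro hqt
    rcases h23 with h | h
    · exact h (by rw [e2, hqt, add_top])
    · exact h (by rw [e3, hqt, add_top])
  by_cases hP1 : sepCount x z y w = ⊤ <;> by_cases hP2 : sepCount x w y z = ⊤
  · exfalso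
    rcases h23 with h | h
    · exact h (by rw [e2, hP1, top_add])
    · exact h (by rw [e3, hP2, top_add])
  · -- P1 = ⊤, P2 ≠ ⊤ : both sides are ⊤
    have h3 : grom G v x w + grom G v y z ≠ ⊤ := by
      rw [e3]; exact WithTop.add_ne_top.mpr ⟨hP2, hq⟩
    have hc : grom G v x w ≠ ⊤ := fun h => h3 (by rw [h, top_add])
    have hd : grom G v y z ≠ ⊤ := fun h => h3 (by rw [h, add_top])
    have hab : grom G v x z = ⊤ ∨ grom G v y w = ⊤ := by
      have h' : grom G v x z + grom G v y w = ⊤ := by rw [e2, hP1, top_add]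
      exact WithTop.add_eq_top.mp h'
    obtain ⟨n3, hn3⟩ : ∃ n : ℕ, grom G v x w = (n : ℕ∞) := by
      lift grom G v x w to ℕ using hc with n hn; exact ⟨n, rfl⟩
    obtain ⟨n4, hn4⟩ : ∃ n : ℕ, grom G v y z = (n : ℕ∞) := by
      lift grom G v y z to ℕ using hd with n hn; exact ⟨n, rfl⟩
    obtain ⟨p2, hp2⟩ : ∃ n : ℕ, sepCount x w y z = (n : ℕ∞) := by
      lift sepCount x w y z to ℕ using hP2 with n hn; exact ⟨n, rfl⟩
    have htop : toE (grom G v x z) + toE (grom G v y w) = ⊤ := by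
      rcases hab with h | h
      · rw [h, toE_top, EReal.top_add_of_ne_bot (toE_ne_bot _)]
      · rw [h, toE_top, EReal.add_top_of_ne_bot (toE_ne_bot _)]
    rw [crv, htop, hn3, hn4, hP1, hp2, toE_top, toE_coe, toE_coe, toE_coe,
      EReal.top_sub_coe, EReal.top_sub_coe, EReal.top_sub_coe]
  · -- P1 ≠ ⊤, P2 = ⊤ : both sides are ⊥
    have h2 : grom G v x z + grom G v y w ≠ ⊤ := by
      rw [e2]; exact WithTop.add_ne_top.mpr ⟨hP1, hq⟩
    have ha : grom G v x z ≠ ⊤ := fun h => h2 (by rw [h, top_add])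
    have hb : grom G v y w ≠ ⊤ := fun h => h2 (by rw [h, add_top])
    obtain ⟨n1, hn1⟩ : ∃ n : ℕ, grom G v x z = (n : ℕ∞) := by
      lift grom G v x z to ℕ using ha with n hn; exact ⟨n, rfl⟩
    obtain ⟨n2, hn2⟩ : ∃ n : ℕ, grom G v y w = (n : ℕ∞) := by
      lift grom G v y w to ℕ using hb with n hn; exact ⟨n, rfl⟩
    obtain ⟨p1, hp1⟩ : ∃ n : ℕ, sepCount x z y w = (n : ℕ∞) := by
      lift sepCount x z y w to ℕ using hP1 with n hn; exact ⟨n, rfl⟩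
    have hcd : grom G v x w = ⊤ ∨ grom G v y z = ⊤ := by
      have h' : grom G v x w + grom G v y z = ⊤ := by rw [e3, hP2, top_add]
      exact WithTop.add_eq_top.mp h'
    rw [crv, hn1, hn2, hp1, hP2, toE_coe, toE_coe, toE_coe, toE_top, EReal.sub_top]
    by_cases hcc : grom G v x w = ⊤
    · rw [hcc, toE_top, EReal.sub_top, EReal.bot_sub]
    · have hdd : grom G v y z = ⊤ := by tauto
      rw [hdd, toE_top, EReal.sub_top]
  · -- both finite
    have h2 : grom G v x z + grom G v y w ≠ ⊤ := by
      rw [e2]; exact WithTop.add_ne_top.mpr ⟨hP1, hq⟩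
    have h3 : grom G v x w + grom G v y z ≠ ⊤ := by
      rw [e3]; exact WithTop.add_ne_top.mpr ⟨hP2, hq⟩
    have ha : grom G v x z ≠ ⊤ := fun h => h2 (by rw [h, top_add])
    have hb : grom G v y w ≠ ⊤ := fun h => h2 (by rw [h, add_top])
    have hc : grom G v x w ≠ ⊤ := fun h => h3 (by rw [h, top_add])
    have hd : grom G v y z ≠ ⊤ := fun h => h3 (by rw [h, add_top])
    obtain ⟨n1, hn1⟩ : ∃ n : ℕ, grom G v x z = (n : ℕ∞) := by
      lift grom G v x z to ℕ using ha with n hn; exact ⟨n, rfl⟩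
    obtain ⟨n2, hn2⟩ : ∃ n : ℕ, grom G v y w = (n : ℕ∞) := by
      lift grom G v y w to ℕ using hb with n hn; exact ⟨n, rfl⟩
    obtain ⟨n3, hn3⟩ : ∃ n : ℕ, grom G v x w = (n : ℕ∞) := by
      lift grom G v x w to ℕ using hc with n hn; exact ⟨n, rfl⟩
    obtain ⟨n4, hn4⟩ : ∃ n : ℕ, grom G v y z = (n : ℕ∞) := by
      lift grom G v y z to ℕ using hd with n hn; exact ⟨n, rfl⟩
    obtain ⟨p1, hp1⟩ : ∃ n : ℕ, sepCount x z y w = (n : ℕ∞) := by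
      lift sepCount x z y w to ℕ using hP1 with n hn; exact ⟨n, rfl⟩
    obtain ⟨p2, hp2⟩ : ∃ n : ℕ, sepCount x w y z = (n : ℕ∞) := by
      lift sepCount x w y z to ℕ using hP2 with n hn; exact ⟨n, rfl⟩
    obtain ⟨q0, hq0⟩ : ∃ n : ℕ, qpart v x y z w = (n : ℕ∞) := by
      lift qpart v x y z w to ℕ using hq with n hn; exact ⟨n, rfl⟩
    have e2n : n1 + n2 = p1 + q0 := by
      have := e2; rw [hn1, hn2, hp1, hq0] at this; exact_mod_cast this
    have e3n : n3 + n4 = p2 + q0 := by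
      have := e3; rw [hn3, hn4, hp2, hq0] at this; exact_mod_cast this
    rw [crv, hn1, hn2, hn3, hn4, hp1, hp2, toE_coe, toE_coe, toE_coe, toE_coe,
      toE_coe, toE_coe]
    rw [show ((n1 : ℝ) : EReal) + ((n2 : ℝ) : EReal) - ((n3 : ℝ) : EReal) -
        ((n4 : ℝ) : EReal) = ((((n1 : ℝ) + n2 - n3 - n4) : ℝ) : EReal) from by norm_cast,
      show ((p1 : ℝ) : EReal) - ((p2 : ℝ) : EReal) = ((((p1 : ℝ) - p2) : ℝ) : EReal) from by
        norm_cast]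
    rw [EReal.coe_eq_coe_iff]
    have c2 : (n1 : ℝ) + n2 = p1 + q0 := by exact_mod_cast e2n
    have c3 : (n3 : ℝ) + n4 = p2 + q0 := by exact_mod_cast e3n
    linarith

lemma grom_map (g : G ≃g G) (v : V) (x y : Set (Set V)) :
    grom G v (mapUltra ⇑g x) (mapUltra ⇑g y) = grom G (g.symm v) x y := by
  rw [grom, grom]
  have himg : {h : Set V | h ∈ mapUltra ⇑g x ∧ h ∈ mapUltra ⇑g y ∧ v ∉ h} =
      (fun h : Set V => ⇑g '' h) '' {h : Set V | h ∈ x ∧ h ∈ y ∧ g.symm v ∉ h} := by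
    ext h'
    constructor
    · rintro ⟨⟨h, hhx, rfl⟩, hy', hv⟩
      obtain ⟨k, hky, hek⟩ := hy'
      have hk : k = h := Set.image_injective.mpr (RelIso.injective g) hek
      rw [hk] at hky
      refine ⟨h, ⟨hhx, hky, fun hsv => hv ?_⟩, rfl⟩
      exact ⟨g.symm v, hsv, g.apply_symm_apply v⟩
    · rintro ⟨h, ⟨hhx, hhy, hv⟩, rfl⟩
      refine ⟨⟨h, hhx, rfl⟩, ⟨h, hhy, rfl⟩, ?_⟩
      rintro ⟨u, hu, huv⟩
      refine hv ?_
      rw [← huv, RelIso.symm_apply_apply]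
      exact hu
  rw [himg, (Set.image_injective.mpr (RelIso.injective g)).encard_image]

end CCCRProof

open CCCR
/-- Corollary `independent of basepoint 2`: the cross ratio is
independent of the basepoint, and it is preserved by every automorphism of `X`
acting on the Roller compactification. -/
theorem stmt4 {V : Type*} (G : SimpleGraph V) (hG : IsCCC G)
    (x y z w : Set (Set V)) (hx : IsUltra G x) (hy : IsUltra G y)
    (hz : IsUltra G z) (hw : IsUltra G w) (hA : memA G x y z w) :
    (∀ v v' : V, crv G v x y z w = crv G v' x y z w) ∧
    ∀ (g : G ≃g G) (v : V),
      crv G v (mapUltra ⇑g x) (mapUltra ⇑g y) (mapUltra ⇑g z) (mapUltra ⇑g w) =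
        crv G v x y z w := by
  have hbase : ∀ v v' : V, crv G v x y z w = crv G v' x y z w := fun v v' => by
    rw [CCCRProof.key hx hy hz hw hA v, CCCRProof.key hx hy hz hw hA v']
  refine ⟨hbase, fun g v => ?_⟩
  have hmap : crv G v (mapUltra ⇑g x) (mapUltra ⇑g y) (mapUltra ⇑g z) (mapUltra ⇑g w) =
      crv G (g.symm v) x y z w := by
    rw [crv, crv, CCCRProof.grom_map, CCCRProof.grom_map, CCCRProof.grom_map,
      CCCRProof.grom_map]
  rw [hmap]
  exact hbase _ _
end

section
/- Let X be a CAT(0) cube complex and let x, y, z ∈ X̄ satisfy x op_z y, with m := m(x,y,z) ∈ X. Then for every w ∈ ∂X, either (x·w)_m = 0 or (y·w)_m = 0. -/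
/-!
We use the standard combinatorial model of a CAT(0) cube complex: it is identified
with its vertex set endowed with the combinatorial (ℓ¹) metric, i.e. with a median
graph `G` on a vertex type `V`.  Halfspaces are realised as the vertex sets of the
two sides of the hyperplane dual to an edge, the Roller compactification `X̄` is the
set of ultrafilters of halfspaces, vertices embedding via principal ultrafilters,
and the Roller boundary `∂X` consists of the non-principal ultrafilters.
-/

open scoped ENNReal
open Set

open CCCR
/-- Remark `one is zero`: if `x` and `y` are opposite with respect
to `z`, with median the vertex `p`, then for every boundary point `w` one of the
Gromov products `(x·w)_p`, `(y·w)_p` vanishes. -/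
theorem stmt5 {V : Type*} (G : SimpleGraph V) (hG : IsCCC G)
    (x y z : Set (Set V)) (hx : IsUltra G x) (hy : IsUltra G y) (hz : IsUltra G z)
    (hop : Op G x y z) (p : V) (hp : med x y z = princ G p)
    (w : Set (Set V)) (hw : IsBdryPt G w) :
    grom G p x w = 0 ∨ grom G p y w = 0 := by
  by_contra hcon
  push_neg at hcon
  obtain ⟨hxw, hyw⟩ := hcon
  simp only [grom, Set.encard_ne_zero] at hxw hyw
  obtain ⟨h, hhx, hhw, hhp⟩ := hxw
  obtain ⟨k, hky, hkw, hkp⟩ := hyw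
  set σ := med x y w with hσdef
  have hσxy : x ∩ y ⊆ σ := fun t ht => Or.inl (Or.inl ht)
  have hσultra : IsUltra G σ := by
    refine ⟨?_, ?_, ?_⟩
    · intro t ht
      rcases ht with (⟨ht, _⟩ | ⟨ht, _⟩) | ⟨ht, _⟩
      exacts [hx.1 t ht, hy.1 t ht, hw.1.1 t ht]
    · intro t ht
      have Hx := hx.2.1 t ht
      have Hy := hy.2.1 t ht
      have Hw := hw.1.2.1 t ht
      simp only [hσdef, med, Set.mem_union, Set.mem_inter_iff] at *
      tauto
    · intro a ha b hb
      have hcase : (a ∈ x ∧ b ∈ x) ∨ (a ∈ y ∧ b ∈ y) ∨ (a ∈ w ∧ b ∈ w) := by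
        simp only [hσdef, med, Set.mem_union, Set.mem_inter_iff] at ha hb
        tauto
      rcases hcase with ⟨h1, h2⟩ | ⟨h1, h2⟩ | ⟨h1, h2⟩
      exacts [hx.2.2 a h1 b h2, hy.2.2 a h1 b h2, hw.1.2.2 a h1 b h2]
  have hσI : σ ∈ rInterval G x y := ⟨hσultra, hσxy⟩
  rw [hop.2, hp] at hσI
  have hxy_sub : x ∩ y ⊆ princ G p := by
    rw [← hp]; exact fun t ht => Or.inl (Or.inl ht)
  rcases hσI with ⟨_, hsub⟩ | ⟨_, hsub⟩
  · have hknx : k ∉ x := fun hk => hkp (hxy_sub ⟨hk, hky⟩).2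
    have hkc : kᶜ ∈ x := by
      have := hx.2.1 k (hy.1 k hky)
      tauto
    have h1 : kᶜ ∈ σ := hsub ⟨hkc, hx.1 _ hkc, hkp⟩
    have h2 : k ∈ σ := Or.inl (Or.inr ⟨hky, hkw⟩)
    obtain ⟨t, ht1, ht2⟩ := hσultra.2.2 _ h1 _ h2
    exact ht1 ht2
  · have hhny : h ∉ y := fun hk => hhp (hxy_sub ⟨hhx, hk⟩).2
    have hhc : hᶜ ∈ y := by
      have := hy.2.1 h (hx.1 h hhx)
      tauto
    have h1 : hᶜ ∈ σ := hsub ⟨⟨hy.1 _ hhc, hhp⟩, hhc⟩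
    have h2 : h ∈ σ := Or.inr ⟨hhw, hhx⟩
    obtain ⟨t, ht1, ht2⟩ := hσultra.2.2 _ h1 _ h2
    exact ht1 ht2
end
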